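/- (Frank–Wolfe recursion with 1/(t+1) steps, deterministic form) Let F be convex and L-smooth on a convex set P of diameter at most √2 in the 2-norm, with minimizer η*. Suppose a sequence η_{t+1} = η_t + (1/(t+1))(x_t − η_t) with x_t ∈ P satisfies ∇F(η_t)ᵀ(x_t − η_t) ≤ ∇F(η_t)ᵀ(η* − η_t) + ε_t. Then setting ρ_t = F(η_t) − F(η*), we have for all T ≥ 1: ρ_T ≤ ρ_1/T + (1/T)∑_{t=1}^{T−1} ε_t + (L log T)/T. -/

import Mathlib

open scoped InnerProductSpace
open Finset

section Aux

variable {E : Type*} [NormedAddCommGroup E] [InnerProductSpace ℝ E] [CompleteSpace E]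

lemma aux_line_hasDerivAt (F : E → ℝ) (hFdiff : Differentiable ℝ F) (a v : E) (s : ℝ) :
    HasDerivAt (fun s : ℝ => F (a + s • v)) ⟪gradient F (a + s • v), v⟫_ℝ s := by
  have h1 : HasFDerivAt F (InnerProductSpace.toDual ℝ E (gradient F (a + s • v))) (a + s • v) :=
    (hFdiff (a + s • v)).hasGradientAt.hasFDerivAt
  have h2 : HasDerivAt (fun s : ℝ => a + s • v) v s := by
    simpa using ((hasDerivAt_id s).smul_const v).const_add a
  have h3 := h1.comp_hasDerivAt s h2
  refine h3.congr_deriv ?_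
  simp [InnerProductSpace.toDual_apply_apply]

lemma aux_convex_grad (F : E → ℝ) (hFconv : ConvexOn ℝ Set.univ F)
    (hFdiff : Differentiable ℝ F) (a b : E) :
    ⟪gradient F a, b - a⟫_ℝ ≤ F b - F a := by
  set g : ℝ → ℝ := fun s => F (a + s • (b - a)) with hg
  have hgconv : ConvexOn ℝ Set.univ g := by
    have h := hFconv.comp_affineMap (AffineMap.lineMap a b : ℝ →ᵃ[ℝ] E)
    have heq : (F ∘ (AffineMap.lineMap a b : ℝ →ᵃ[ℝ] E)) = g := by
      funext s
      simp [hg, Function.comp, AffineMap.lineMap_apply, vsub_eq_sub, vadd_eq_add, add_comm]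
    rw [heq] at h
    simpa using h
  have hd0 : HasDerivAt g ⟪gradient F a, b - a⟫_ℝ 0 := by
    simpa using aux_line_hasDerivAt F hFdiff a (b - a) 0
  have hslope := hgconv.le_slope_of_hasDerivAt (Set.mem_univ 0) (Set.mem_univ 1) one_pos hd0
  have : slope g 0 1 = g 1 - g 0 := by
    simp [slope_def_field]
  rw [this] at hslope
  have hg1 : g 1 = F b := by simp [hg]
  have hg0 : g 0 = F a := by simp [hg]
  rw [hg1, hg0] at hslope
  exact hslope

lemma aux_descent (F : E → ℝ) (hFdiff : Differentiable ℝ F) (L : ℝ) (hL : 0 ≤ L)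
    (hFsmooth : LipschitzWith (Real.toNNReal L) (gradient F)) (a b : E) :
    F b ≤ F a + ⟪gradient F a, b - a⟫_ℝ + L / 2 * ‖b - a‖ ^ 2 := by
  set v := b - a with hv
  set g : ℝ → ℝ := fun s => F (a + s • v) - s * ⟪gradient F a, v⟫_ℝ - L / 2 * s ^ 2 * ‖v‖ ^ 2
    with hg
  have hgd : ∀ s : ℝ, HasDerivAt g
      (⟪gradient F (a + s • v), v⟫_ℝ - ⟪gradient F a, v⟫_ℝ - L * s * ‖v‖ ^ 2) s := by
    intro s
    have h1 := aux_line_hasDerivAt F hFdiff a v s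
    have h2 : HasDerivAt (fun s : ℝ => s * ⟪gradient F a, v⟫_ℝ) ⟪gradient F a, v⟫_ℝ s := by
      simpa using (hasDerivAt_id s).mul_const ⟪gradient F a, v⟫_ℝ
    have h3 : HasDerivAt (fun s : ℝ => L / 2 * s ^ 2 * ‖v‖ ^ 2) (L * s * ‖v‖ ^ 2) s := by
      have := ((hasDerivAt_pow 2 s).const_mul (L / 2)).mul_const (‖v‖ ^ 2)
      refine this.congr_deriv ?_
      ring
    exact (h1.sub h2).sub h3
  have hderiv_nonpos : ∀ s ∈ Set.Icc (0:ℝ) 1, 0 ≤ s → deriv g s ≤ 0 := by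
    intro s _ hs
    rw [(hgd s).deriv]
    have hlip : ‖gradient F (a + s • v) - gradient F a‖ ≤ L * (s * ‖v‖) := by
      have := hFsmooth.dist_le_mul (a + s • v) a
      rw [Real.coe_toNNReal L hL] at this
      simpa [dist_eq_norm, norm_smul, abs_of_nonneg hs, mul_assoc] using this
    have hinner : ⟪gradient F (a + s • v), v⟫_ℝ - ⟪gradient F a, v⟫_ℝ ≤ L * s * ‖v‖ ^ 2 := by
      rw [← inner_sub_left]
      calc ⟪gradient F (a + s • v) - gradient F a, v⟫_ℝ
          ≤ ‖gradient F (a + s • v) - gradient F a‖ * ‖v‖ := real_inner_le_norm _ _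
        _ ≤ L * (s * ‖v‖) * ‖v‖ := by
            apply mul_le_mul_of_nonneg_right hlip (norm_nonneg v)
        _ = L * s * ‖v‖ ^ 2 := by ring
    linarith
  have hanti : AntitoneOn g (Set.Icc 0 1) := by
    apply antitoneOn_of_deriv_nonpos (convex_Icc 0 1)
    · exact fun s _ => ((hgd s).continuousAt).continuousWithinAt
    · intro s hs
      exact ((hgd s).differentiableAt).differentiableWithinAt
    · intro s hs
      rw [interior_Icc] at hs
      exact hderiv_nonpos s ⟨hs.1.le, hs.2.le⟩ hs.1.le
  have h01 := hanti (Set.mem_Icc.mpr ⟨le_refl 0, zero_le_one⟩)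
    (Set.mem_Icc.mpr ⟨zero_le_one, le_refl 1⟩) zero_le_one
  have hg0 : g 0 = F a := by simp [hg]
  have hg1 : g 1 = F b - ⟪gradient F a, v⟫_ℝ - L / 2 * ‖v‖ ^ 2 := by
    simp [hg, hv]
  rw [hg0, hg1] at h01
  linarith

end Aux

/-- Frank–Wolfe recursion with `1/(t+1)` steps, deterministic form: if `F` is
convex and `L`-smooth, `P` is convex with diameter at most `√2`, `η*` minimizes `F` over `P`,
and the iterates `η_{t+1} = η_t + (1/(t+1))(x_t − η_t)` with `x_t ∈ P` satisfy
`⟪∇F(η_t), x_t − η_t⟫ ≤ ⟪∇F(η_t), η* − η_t⟫ + ε_t`, then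
`F(η_T) − F(η*) ≤ (F(η_1) − F(η*))/T + (1/T)∑_{t=1}^{T−1} ε_t + L log T / T`. -/
theorem stmt9 {E : Type*} [NormedAddCommGroup E] [InnerProductSpace ℝ E] [CompleteSpace E]
    {P : Set E} (hP : Convex ℝ P) (hdiam : ∀ a ∈ P, ∀ b ∈ P, ‖a - b‖ ≤ Real.sqrt 2)
    (F : E → ℝ) (hFconv : ConvexOn ℝ Set.univ F) (hFdiff : Differentiable ℝ F)
    (L : ℝ) (hL : 0 ≤ L) (hFsmooth : LipschitzWith (Real.toNNReal L) (gradient F))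
    {ηstar : E} (hηstar : ηstar ∈ P) (hmin : ∀ y ∈ P, F ηstar ≤ F y)
    (η x : ℕ → E) (ε : ℕ → ℝ)
    (hη1 : η 1 ∈ P) (hx : ∀ t, 1 ≤ t → x t ∈ P)
    (hrec : ∀ t, 1 ≤ t → η (t + 1) = η t + ((1 : ℝ) / (t + 1)) • (x t - η t))
    (hgap : ∀ t, 1 ≤ t →
      ⟪gradient F (η t), x t - η t⟫_ℝ ≤ ⟪gradient F (η t), ηstar - η t⟫_ℝ + ε t) :
    ∀ T : ℕ, 1 ≤ T →
      F (η T) - F ηstar ≤ (F (η 1) - F ηstar) / T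
        + (1 / (T : ℝ)) * ∑ t ∈ Icc 1 (T - 1), ε t
        + L * Real.log T / T := by
  -- membership of iterates
  have hmem : ∀ t, 1 ≤ t → η t ∈ P := by
    intro t ht
    induction t, ht using Nat.le_induction with
    | base => exact hη1
    | succ n hn ih =>
      rw [hrec n hn]
      have hc0 : (0:ℝ) < (n:ℝ) + 1 := by positivity
      have hc1 : (1:ℝ) / ((n:ℝ) + 1) ≤ 1 := by
        rw [div_le_one hc0]
        have : (1:ℝ) ≤ (n:ℝ) := by exact_mod_cast hn
        linarith
      have heq : η n + ((1:ℝ) / ((n:ℝ)+1)) • (x n - η n)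
          = (1 - (1:ℝ)/((n:ℝ)+1)) • η n + ((1:ℝ)/((n:ℝ)+1)) • x n := by
        rw [smul_sub, sub_smul, one_smul]; abel
      rw [heq]
      exact hP ih (hx n hn) (by linarith) (by positivity) (by ring)
  -- one-step recursion
  have hstep : ∀ t : ℕ, 1 ≤ t →
      ((t:ℝ) + 1) * (F (η (t+1)) - F ηstar)
        ≤ (t:ℝ) * (F (η t) - F ηstar) + ε t + L / ((t:ℝ) + 1) := by
    intro t ht
    have hc0 : (0:ℝ) < (t:ℝ) + 1 := by positivity
    set c : ℝ := 1 / ((t:ℝ) + 1) with hc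
    have hcpos : 0 < c := by positivity
    have hdiff : η (t+1) - η t = c • (x t - η t) := by
      rw [hrec t ht]; push_cast; abel
    have hdesc := aux_descent F hFdiff L hL hFsmooth (η t) (η (t+1))
    rw [hdiff] at hdesc
    have hnorm2 : ‖x t - η t‖ ^ 2 ≤ 2 := by
      have h1 := hdiam (x t) (hx t ht) (η t) (hmem t ht)
      have h2 : ‖x t - η t‖ ^ 2 ≤ Real.sqrt 2 ^ 2 :=
        pow_le_pow_left₀ (norm_nonneg _) h1 2
      rwa [Real.sq_sqrt (by norm_num : (0:ℝ) ≤ 2)] at h2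
    have hinner : ⟪gradient F (η t), c • (x t - η t)⟫_ℝ
        = c * ⟪gradient F (η t), x t - η t⟫_ℝ := real_inner_smul_right _ _ _
    have hns : ‖c • (x t - η t)‖ ^ 2 = c ^ 2 * ‖x t - η t‖ ^ 2 := by
      rw [norm_smul, mul_pow, Real.norm_eq_abs, sq_abs]
    rw [hinner, hns] at hdesc
    have hgrad := aux_convex_grad F hFconv hFdiff (η t) ηstar
    have hg := hgap t ht
    have hI : ⟪gradient F (η t), x t - η t⟫_ℝ ≤ -(F (η t) - F ηstar) + ε t := by
      have := hmin (η t) (hmem t ht)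
      linarith
    -- combine: F η(t+1) ≤ F η t + c*(-(ρ t)+ε t) + L/2*c^2*2
    have hq : L / 2 * (c ^ 2 * ‖x t - η t‖ ^ 2) ≤ L * c ^ 2 := by
      nlinarith [mul_nonneg (mul_nonneg hL (sq_nonneg c)) (sub_nonneg.mpr hnorm2)]
    have hkey : F (η (t+1))
        ≤ (F (η t)) + c * (-(F (η t) - F ηstar) + ε t) + L * c ^ 2 := by
      have h5 := mul_le_mul_of_nonneg_left hI hcpos.le
      linarith
    have hne : ((t:ℝ) + 1) ≠ 0 := ne_of_gt hc0
    have hkey2 : F (η (t+1)) - F ηstar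
        ≤ (F (η t) - F ηstar) + c * (-(F (η t) - F ηstar) + ε t) + L * c ^ 2 := by
      linarith
    calc ((t:ℝ) + 1) * (F (η (t+1)) - F ηstar)
        ≤ ((t:ℝ) + 1) * ((F (η t) - F ηstar) + c * (-(F (η t) - F ηstar) + ε t) + L * c ^ 2) :=
          mul_le_mul_of_nonneg_left hkey2 hc0.le
      _ = (t:ℝ) * (F (η t) - F ηstar) + ε t + L / ((t:ℝ) + 1) := by
          rw [hc]; field_simp; ring
  -- main induction
  have hmain : ∀ T : ℕ, 1 ≤ T →
      (T:ℝ) * (F (η T) - F ηstar)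
        ≤ (F (η 1) - F ηstar) + ∑ t ∈ Icc 1 (T-1), ε t
          + L * ∑ t ∈ Icc 1 (T-1), (1 / ((t:ℝ) + 1)) := by
    intro T hT
    induction T, hT using Nat.le_induction with
    | base => simp
    | succ n hn ih =>
      obtain ⟨m, rfl⟩ : ∃ m, n = m + 1 := ⟨n - 1, (Nat.succ_pred_eq_of_pos hn).symm⟩
      have hs := hstep (m+1) (by omega)
      have he1 : ∑ t ∈ Icc 1 (m+1+1-1), ε t = ∑ t ∈ Icc 1 (m+1-1), ε t + ε (m+1) := by
        simp only [Nat.add_sub_cancel]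
        exact Finset.sum_Icc_succ_top (by omega) ε
      have he2 : ∑ t ∈ Icc 1 (m+1+1-1), (1 / ((t:ℝ) + 1))
          = ∑ t ∈ Icc 1 (m+1-1), (1 / ((t:ℝ) + 1)) + 1 / (((m+1:ℕ):ℝ) + 1) := by
        simp only [Nat.add_sub_cancel]
        exact Finset.sum_Icc_succ_top (by omega) _
      rw [he1, he2, mul_add, mul_one_div]
      push_cast at hs ih ⊢
      linarith
  -- harmonic sum bounded by log
  have hlog : ∀ T : ℕ, 1 ≤ T →
      ∑ t ∈ Icc 1 (T-1), (1 / ((t:ℝ) + 1)) ≤ Real.log T := by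
    intro T hT
    induction T, hT using Nat.le_induction with
    | base => simp
    | succ n hn ih =>
      obtain ⟨m, rfl⟩ : ∃ m, n = m + 1 := ⟨n - 1, (Nat.succ_pred_eq_of_pos hn).symm⟩
      have he2 : ∑ t ∈ Icc 1 (m+1+1-1), (1 / ((t:ℝ) + 1))
          = ∑ t ∈ Icc 1 (m+1-1), (1 / ((t:ℝ) + 1)) + 1 / (((m+1:ℕ):ℝ) + 1) := by
        simp only [Nat.add_sub_cancel]
        exact Finset.sum_Icc_succ_top (by omega) _
      rw [he2]
      have hn0 : (0:ℝ) < ((m+1:ℕ):ℝ) := by positivity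
      have hn1 : (0:ℝ) < ((m+1:ℕ):ℝ) + 1 := by positivity
      have hd : (0:ℝ) < ((m+1:ℕ):ℝ) / (((m+1:ℕ):ℝ) + 1) := by positivity
      have hlog1 := Real.log_le_sub_one_of_pos hd
      rw [Real.log_div (ne_of_gt hn0) (ne_of_gt hn1)] at hlog1
      have hfrac : ((m+1:ℕ):ℝ) / (((m+1:ℕ):ℝ) + 1) - 1 = -(1 / (((m+1:ℕ):ℝ) + 1)) := by
        field_simp
        ring
      rw [hfrac] at hlog1
      have hcast : ((m+1+1:ℕ):ℝ) = ((m+1:ℕ):ℝ) + 1 := by push_cast; ring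
      rw [hcast]
      linarith
  -- conclude
  intro T hT
  have hTpos : (0:ℝ) < (T:ℝ) := by
    have : (1:ℝ) ≤ (T:ℝ) := by exact_mod_cast hT
    linarith
  have h1 := hmain T hT
  have h2 := mul_le_mul_of_nonneg_left (hlog T hT) hL
  have hfinal : F (η T) - F ηstar
      ≤ ((F (η 1) - F ηstar) + ∑ t ∈ Icc 1 (T-1), ε t + L * Real.log T) / T := by
    rw [le_div_iff₀ hTpos]
    nlinarith
  refine hfinal.trans_eq ?_
  ring
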